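/- Let F̂ : K × K → 𝔸 be a normalized 2-cocycle and let ε : K³ → ℂˣ be a normalized cochain with δ_K ε = F̂ ∧ F. Define ω : G³ → ℂˣ by ω((a₁,x₁),(a₂,x₂),(a₃,x₃)) := F̂(x₁,x₂)(a₃)·ε(x₁,x₂,x₃), define μ ∈ C²(G,Map(K,ℂˣ)) by μ(x₁;(a₂,x₂),(a₃,x₃)) := (F̂(x₁,x₂)(a₃)·ε(x₁,x₂,x₃))⁻¹, and define γ : K → C¹(G,Map(K,ℂˣ)) by γ(y)(x₁;(a₂,x₂)) := F̂(y,x₁)(a₂)·ε(y,x₁,x₂). Then: (i) (δ_G μ)(x₁;g₁,g₂,g₃)·ω(g₁,g₂,g₃) = 1 for all x₁ ∈ K and g₁,g₂,g₃ ∈ G; (ii) δ_G(γ(y))(x₁;(a₂,x₂),(a₃,x₃)) = μ(x₁;(a₂,x₂),(a₃,x₃))·μ(yx₁;(a₂,x₂),(a₃,x₃))⁻¹ for all y,x₁,x₂,x₃ ∈ K and a₂,a₃ ∈ A; and (iii) (δ_K γ)(k₁,k₂)(x₁;(a₂,x₂)) = F̂(k₁,k₂)(ˣ¹a₂)·F̂(k₁,k₂)(F(x₁,x₂))·ε(k₁,k₂,x₁x₂)·ε(k₁,k₂,x₁)⁻¹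 for all k₁,k₂,x₁,x₂ ∈ K and a₂ ∈ A. -/

import Mathlib

open scoped BigOperators

section Defs

variable {A K : Type*} [CommGroup A] [Group K] [MulDistribMulAction K A]

/-- The product of the twisted (semidirect) product `G = A ⋊_F K`:
`(a₁,k₁)·(a₂,k₂) = (a₁ · ᵏ¹a₂ · F(k₁,k₂), k₁k₂)`. -/
def sdMul (F : K → K → A) (g₁ g₂ : A × K) : A × K :=
  (g₁.1 * g₁.2 • g₂.1 * F g₁.2 g₂.2, g₁.2 * g₂.2)

/-- The right action of `G = A ⋊_F K` on `K`:  `x ◁ (a,k) = x * k`. -/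
def sdAct (x : K) (g : A × K) : K := x * g.2

/-- `κ : K × G → A`, `κ_{x,(a,k)} = ˣa · F(x,k)`. -/
def kap (F : K → K → A) (x : K) (g : A × K) : A := x • g.1 * F x g.2

/-- Underlying type of the group of cochains `C^q(G, Map(K,ℂˣ))`. -/
abbrev Cq (A K : Type*) (q : ℕ) := K → (Fin q → A × K) → ℂˣ

/-- Normalization condition for cochains in `C^q(G, Map(K,ℂˣ))`:
`f(x; g₁,…,g_q) = 1` whenever some `gᵢ = 1`. -/
def NormG {q : ℕ} (f : Cq A K q) : Prop :=
  ∀ x g, (∃ i, g i = ((1 : A), (1 : K))) → f x g = 1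

/-- The differential `δ_G : C^q(G, Map(K,ℂˣ)) → C^{q+1}(G, Map(K,ℂˣ))`. -/
def deltaG (F : K → K → A) {q : ℕ} (f : Cq A K q) : Cq A K (q + 1) := fun x g =>
  f (sdAct x (g 0)) (Fin.tail g) *
    ∏ i : Fin (q + 1), f x (Fin.contractNth i (sdMul F) g) ^ ((-1 : ℤ) ^ ((i : ℕ) + 1))

/-- Underlying type of the group of cochains `C^q(A, ℂˣ)`. -/
abbrev CqA (A : Type*) (q : ℕ) := (Fin q → A) → ℂˣ

/-- Normalization condition for cochains in `C^q(A, ℂˣ)`. -/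
def NormA {q : ℕ} (α : CqA A q) : Prop := ∀ a, (∃ i, a i = 1) → α a = 1

/-- The differential `δ_A` on `C^*(A, ℂˣ)` (trivial `A`-action on `ℂˣ`). -/
def deltaA {q : ℕ} (α : CqA A q) : CqA A (q + 1) := fun a =>
  α (Fin.tail a) *
    ∏ i : Fin (q + 1), α (Fin.contractNth i (· * ·) a) ^ ((-1 : ℤ) ^ ((i : ℕ) + 1))

/-- The restriction map `ψ : C^q(G, Map(K,ℂˣ)) → C^q(A, ℂˣ)`,
`ψ(f)(a₁,…,a_q) = f(1; (a₁,1),…,(a_q,1))`. -/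
def psiA {q : ℕ} (f : Cq A K q) : CqA A q := fun a => f 1 fun i => (a i, 1)

/-- The map `φ : C^q(A, ℂˣ) → C^q(G, Map(K,ℂˣ))`,
`φ(α)(x; g₁,…,g_q) = α(κ_{x,g₁}, κ_{x◁g₁,g₂}, …, κ_{x◁g₁⋯g_{q-1},g_q})`. -/
def phiA (F : K → K → A) {q : ℕ} (α : CqA A q) : Cq A K q := fun x g =>
  α fun i => kap F (x * ((List.ofFn fun j => (g j).2).take (i : ℕ)).prod) (g i)

/-- The right `K`-action `f ◁ k` on `C^q(G, Map(K,ℂˣ))`: `(f ◁ k)(x; g) = f(kx; g)`. -/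
def rAct {q : ℕ} (f : Cq A K q) (k : K) : Cq A K q := fun x g => f (k * x) g

/-- Underlying type of `C^p(K, C^q(G, Map(K,ℂˣ)))`. -/
abbrev Cpq (A K : Type*) (p q : ℕ) := (Fin p → K) → Cq A K q

/-- Normalization in the `K`-variables. -/
def NormK {p q : ℕ} (h : Cpq A K p q) : Prop := ∀ k, (∃ i, k i = 1) → h k = 1

/-- The differential `δ_K : C^p(K, C^q(G,Map(K,ℂˣ))) → C^{p+1}(K, C^q(G,Map(K,ℂˣ)))`. -/
def deltaK {p q : ℕ} (h : Cpq A K p q) : Cpq A K (p + 1) q := fun k =>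
  h (Fin.tail k) *
    (∏ i : Fin p, h (Fin.contractNth i.castSucc (· * ·) k) ^ ((-1 : ℤ) ^ ((i : ℕ) + 1))) *
    rAct (h (Fin.init k)) (k (Fin.last p)) ^ ((-1 : ℤ) ^ (p + 1))

end Defs

/-- `ω((a₁,x₁),(a₂,x₂),(a₃,x₃)) = F̂(x₁,x₂)(a₃)·ε(x₁,x₂,x₃)`. -/
def omegaC {A K : Type*} [CommGroup A] (Fh : K → K → A →* ℂˣ) (ε : K → K → K → ℂˣ)
    (g₁ g₂ g₃ : A × K) : ℂˣ :=
  Fh g₁.2 g₂.2 g₃.1 * ε g₁.2 g₂.2 g₃.2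

/-- `μ(x₁;(a₂,x₂),(a₃,x₃)) = (F̂(x₁,x₂)(a₃)·ε(x₁,x₂,x₃))⁻¹`. -/
def muC {A K : Type*} [CommGroup A] (Fh : K → K → A →* ℂˣ) (ε : K → K → K → ℂˣ) : Cq A K 2 :=
  fun x₁ g => (Fh x₁ (g 0).2 (g 1).1 * ε x₁ (g 0).2 (g 1).2)⁻¹

/-- `γ(y)(x₁;(a₂,x₂)) = F̂(y,x₁)(a₂)·ε(y,x₁,x₂)`. -/
def gammaC {A K : Type*} [CommGroup A] (Fh : K → K → A →* ℂˣ) (ε : K → K → K → ℂˣ) :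
    K → Cq A K 1 :=
  fun y x₁ g => Fh y x₁ (g 0).1 * ε y x₁ (g 0).2

set_option maxHeartbeats 1000000 in
/-- (i) `δ_G μ · π^*ω = 1`; (ii) `δ_G(γ(y)) = μ/(μ◁y)`;
(iii) the explicit formula for `δ_K γ`. -/
theorem statement10 {A K : Type*} [CommGroup A] [Group K] [Finite A] [Finite K]
    [MulDistribMulAction K A]
    (F : K → K → A)
    (hFn : ∀ k : K, F 1 k = 1 ∧ F k 1 = 1)
    (hF : ∀ k₁ k₂ k₃ : K, k₁ • F k₂ k₃ * F k₁ (k₂ * k₃) = F (k₁ * k₂) k₃ * F k₁ k₂)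
    (Fh : K → K → A →* ℂˣ)
    (hFhn : ∀ k : K, Fh 1 k = 1 ∧ Fh k 1 = 1)
    (hFh : ∀ (k₁ k₂ k₃ : K) (a : A),
      Fh k₂ k₃ a * Fh k₁ (k₂ * k₃) a = Fh (k₁ * k₂) k₃ a * Fh k₁ k₂ (k₃ • a))
    (ε : K → K → K → ℂˣ)
    (hεn : ∀ k₁ k₂ k₃ : K, k₁ = 1 ∨ k₂ = 1 ∨ k₃ = 1 → ε k₁ k₂ k₃ = 1)
    (hε : ∀ k₁ k₂ k₃ k₄ : K,
      ε k₂ k₃ k₄ * (ε (k₁ * k₂) k₃ k₄)⁻¹ * ε k₁ (k₂ * k₃) k₄ * (ε k₁ k₂ (k₃ * k₄))⁻¹ *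
        ε k₁ k₂ k₃ = Fh k₁ k₂ (F k₃ k₄))
 :
    (∀ (x₁ : K) (g : Fin 3 → A × K),
      deltaG F (muC Fh ε) x₁ g * omegaC Fh ε (g 0) (g 1) (g 2) = 1) ∧
    (∀ (y x₁ x₂ x₃ : K) (a₂ a₃ : A),
      deltaG F (gammaC Fh ε y) x₁ ![(a₂, x₂), (a₃, x₃)] =
        muC Fh ε x₁ ![(a₂, x₂), (a₃, x₃)] *
          (muC Fh ε (y * x₁) ![(a₂, x₂), (a₃, x₃)])⁻¹) ∧
    (∀ (k₁ k₂ x₁ x₂ : K) (a₂ : A),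
      deltaK (fun k : Fin 1 → K => gammaC Fh ε (k 0)) ![k₁, k₂] x₁ ![(a₂, x₂)] =
        Fh k₁ k₂ (x₁ • a₂) * Fh k₁ k₂ (F x₁ x₂) *
          ε k₁ k₂ (x₁ * x₂) * (ε k₁ k₂ x₁)⁻¹) := by
  refine ⟨?_, ?_, ?_⟩
  · intro x₁ g
    simp only [deltaG, muC, omegaC, sdAct, Fin.tail]
    norm_num [Fin.prod_univ_succ, Fin.contractNth, sdMul, map_mul]
    have e1 : Fh x₁ (g 0).2 ((g 1).2 • (g 2).1)
        = Fh (g 0).2 (g 1).2 (g 2).1 * Fh x₁ ((g 0).2 * (g 1).2) (g 2).1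
          * (Fh (x₁ * (g 0).2) (g 1).2 (g 2).1)⁻¹ := by
      rw [eq_mul_inv_iff_mul_eq, mul_comm]
      exact (hFh x₁ (g 0).2 (g 1).2 (g 2).1).symm
    have e2 := (hε x₁ (g 0).2 (g 1).2 (g 2).2).symm
    rw [e1, e2]
    rw [Units.ext_iff]
    simp only [Units.val_mul, Units.val_inv_eq_inv_val]
    field_simp
    ring_nf
    simp
  · intro y x₁ x₂ x₃ a₂ a₃
    simp only [deltaG, muC, gammaC, sdAct, sdMul, Matrix.cons_val_zero, Matrix.cons_val_one,
      Matrix.head_cons, Fin.tail_def, Matrix.cons_val', Matrix.empty_val', Fin.prod_univ_succ,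
      Fin.prod_univ_zero, Fin.contractNth]
    norm_num [map_mul]
    have e1 : Fh y x₁ (x₂ • a₃)
        = Fh x₁ x₂ a₃ * Fh y (x₁ * x₂) a₃ * (Fh (y * x₁) x₂ a₃)⁻¹ := by
      rw [eq_mul_inv_iff_mul_eq, mul_comm]
      exact (hFh y x₁ x₂ a₃).symm
    have e2 := (hε y x₁ x₂ x₃).symm
    rw [e1, e2]
    rw [Units.ext_iff]
    simp only [Units.val_mul, Units.val_inv_eq_inv_val]
    field_simp
  · intro k₁ k₂ x₁ x₂ a₂
    simp only [deltaK, rAct, Fin.tail, Fin.init]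
    norm_num [Fin.prod_univ_succ, Fin.contractNth, gammaC, rAct, Fin.last]
    have e1 : Fh k₁ k₂ (x₁ • a₂)
        = Fh k₂ x₁ a₂ * Fh k₁ (k₂ * x₁) a₂ * (Fh (k₁ * k₂) x₁ a₂)⁻¹ := by
      rw [eq_mul_inv_iff_mul_eq, mul_comm]
      exact (hFh k₁ k₂ x₁ a₂).symm
    have e2 := (hε k₁ k₂ x₁ x₂).symm
    rw [e1, e2]
    rw [Units.ext_iff]
    simp only [Units.val_mul, Units.val_inv_eq_inv_val]
    field_simp
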